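/- (Per-coordinate bound in the small-learning-rate regime.) Let η > 0, w ≥ 0, and r ∈ ℝ satisfy 32·η·|r| ≤ 1, and set v = r + 32·η·r². Then (w/η)·( η·v − 1 + exp(−η·v) ) ≤ 4·η·w·r². -/

import Mathlib

/-- Per-coordinate bound in the small-learning-rate regime: if
`32·η·|r| ≤ 1` and `v = r + 32·η·r²`, then
`(w/η)·(η·v − 1 + exp(−η·v)) ≤ 4·η·w·r²`. -/
theorem small_lr_coordinate_bound (η w r : ℝ) (hη : 0 < η) (hw : 0 ≤ w)
    (hsmall : 32 * η * |r| ≤ 1) (v : ℝ) (hv : v = r + 32 * η * r ^ 2) :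
    (w / η) * (η * v - 1 + Real.exp (-(η * v))) ≤ 4 * η * w * r ^ 2 := by
  have hr2 : (0:ℝ) ≤ r ^ 2 := sq_nonneg r
  have hvle : |v| ≤ 2 * |r| := by
    rw [hv]
    calc |r + 32 * η * r ^ 2| ≤ |r| + |32 * η * r ^ 2| := abs_add_le _ _
      _ = |r| + 32 * η * r ^ 2 := by
          rw [abs_of_nonneg (show (0:ℝ) ≤ 32 * η * r ^ 2 by positivity)]
      _ ≤ 2 * |r| := by nlinarith [sq_abs r, abs_nonneg r]
  have hx : |(-(η * v))| ≤ 1 := by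
    rw [abs_neg, abs_mul, abs_of_pos hη]
    nlinarith [abs_nonneg r, abs_nonneg v]
  have hkey := Real.abs_exp_sub_one_sub_id_le hx
  have h1 := (abs_le.mp hkey).2
  rw [neg_sq] at h1
  have h2 : η * v - 1 + Real.exp (-(η * v)) ≤ η ^ 2 * v ^ 2 := by nlinarith
  have h3 : (w / η) * (η * v - 1 + Real.exp (-(η * v))) ≤ (w / η) * (η ^ 2 * v ^ 2) :=
    mul_le_mul_of_nonneg_left h2 (by positivity)
  have h4 : (w / η) * (η ^ 2 * v ^ 2) = w * η * v ^ 2 := by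
    field_simp
  have hv2 : v ^ 2 ≤ 4 * r ^ 2 := by
    nlinarith [sq_abs v, sq_abs r, abs_nonneg r, abs_nonneg v]
  nlinarith [mul_nonneg hw hη.le]
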